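/- For any bipartite density operator ρ_AB on H_A ⊗ H_B, C_{l1}(ρ_AB) ≥ C^{A|B}_{l1}(ρ_AB) + C_{l1}(ρ_B), where ρ_B = Tr_A ρ_AB. -/

import Mathlib

open scoped BigOperators ComplexOrder Kronecker

/-- The square root of a positive semidefinite matrix, as `Matrix.PosSemidef.sqrt` was defined
in the older Mathlib (removed since). -/
noncomputable def posSemidefSqrt {n : Type*} [Fintype n] [DecidableEq n] {M : Matrix n n ℂ}
    (hM : M.PosSemidef) : Matrix n n ℂ :=
  hM.1.eigenvectorUnitary.1 * Matrix.diagonal ((↑) ∘ (√·) ∘ hM.1.eigenvalues) *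
    (star hM.1.eigenvectorUnitary : Matrix n n ℂ)

/-- Trace norm: `‖P‖_tr = Tr √(Pᴴ P)`. -/
noncomputable def traceNorm {n : Type*} [Fintype n] [DecidableEq n] (P : Matrix n n ℂ) : ℝ :=
  ((posSemidefSqrt (Matrix.posSemidef_conjTranspose_mul_self P)).trace).re

/-- The B-blocks of an operator on H_A ⊗ H_B. -/
def blockB {A B : Type*} (Q : Matrix (A × B) (A × B) ℂ) (i j : A) : Matrix B B ℂ :=
  fun b b' => Q (i, b) (j, b')

/-- l1 norm of IQ coherence: C^{A|B}_{l1}(ρ) = Σ_{i≠j} ‖ρ^B_{ij}‖_tr. -/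
noncomputable def CIQl1 {A B : Type*} [Fintype A] [Fintype B] [DecidableEq A] [DecidableEq B]
    (ρ : Matrix (A × B) (A × B) ℂ) : ℝ :=
  ∑ i, ∑ j, if i = j then 0 else traceNorm (blockB ρ i j)

/-- l1 norm of coherence: sum of absolute values of off-diagonal entries. -/
noncomputable def Cl1 {n : Type*} [Fintype n] [DecidableEq n] (σ : Matrix n n ℂ) : ℝ :=
  ∑ p, ∑ q, if p = q then 0 else ‖σ p q‖

section AuxTraceNorm

open Matrix Complex Finset

variable {n : Type*} [Fintype n] [DecidableEq n]

lemma traceNorm_le_sum_abs (M : Matrix n n ℂ) :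
    traceNorm M ≤ ∑ b, ∑ b', ‖M b b'‖ := by
  classical
  have hN := Matrix.posSemidef_conjTranspose_mul_self M
  set lam : n → ℝ := hN.1.eigenvalues with hlam
  have hlam0 : ∀ k, 0 ≤ lam k := fun k => hN.eigenvalues_nonneg k
  set V : Matrix n n ℂ := (hN.1.eigenvectorUnitary : Matrix n n ℂ) with hVdef
  have hVsV : star V * V = 1 := Unitary.coe_star_mul_self hN.1.eigenvectorUnitary
  have hVVs : V * star V = 1 := Unitary.coe_mul_star_self hN.1.eigenvectorUnitary
  -- trace formula
  have htrace : traceNorm M = ∑ k, Real.sqrt (lam k) := by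
    unfold traceNorm
    have hsq : posSemidefSqrt hN = V * diagonal ((↑) ∘ Real.sqrt ∘ lam) * star V := rfl
    rw [hsq, Matrix.trace_mul_comm, ← mul_assoc, hVsV, one_mul, Matrix.trace_diagonal]
    simp [Complex.re_sum]

  -- W = M * V; columns are M·(eigenvectors)
  set W : Matrix n n ℂ := M * V with hWdef
  have hWW : star W * W = diagonal (fun k => (lam k : ℂ)) := by
    have hdiag : star (hN.1.eigenvectorUnitary : Matrix n n ℂ) * (Mᴴ * M) *
        (hN.1.eigenvectorUnitary : Matrix n n ℂ) = diagonal (RCLike.ofReal ∘ hN.1.eigenvalues) := by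
      have := hN.1.conjStarAlgAut_star_eigenvectorUnitary
      rwa [Unitary.conjStarAlgAut_star_apply] at this
    calc star W * W = star V * (Mᴴ * M) * V := by
          rw [hWdef, star_eq_conjTranspose, conjTranspose_mul]
          noncomm_ring
      _ = diagonal (fun k => (lam k : ℂ)) := by
          rw [← hVdef] at hdiag
          rw [hdiag]; rfl
  have horth : ∀ k l, ∑ b, (starRingEnd ℂ) (W b k) * W b l
      = if k = l then (lam k : ℂ) else 0 := by
    intro k l
    have h := congrFun (congrFun hWW k) l
    simpa [Matrix.mul_apply, Matrix.conjTranspose_apply, Matrix.diagonal_apply,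
      Matrix.star_apply] using h
  have hVrow : ∀ b, ∑ k, Complex.normSq (V b k) = 1 := by
    intro b
    have h := congrFun (congrFun hVVs b) b
    have : ∑ k, (Complex.normSq (V b k) : ℂ) = 1 := by
      simpa [Matrix.mul_apply, Matrix.conjTranspose_apply, Matrix.one_apply,
        Matrix.star_apply, Complex.mul_conj] using h
    have h2 := congrArg Complex.re this
    simpa [Complex.re_sum] using h2

  set S : Finset n := Finset.univ.filter (fun k => lam k ≠ 0) with hSdef
  set u : n → n → ℂ := fun b k => W b k / (Real.sqrt (lam k) : ℂ) with hudef
  -- orthonormality of the u-columns over S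
  have huorth : ∀ k ∈ S, ∀ l ∈ S, ∑ b, (starRingEnd ℂ) (u b k) * u b l
      = if k = l then 1 else 0 := by
    intro k hk l hl
    have hk0 : lam k ≠ 0 := by simpa [hSdef] using hk
    have hl0 : lam l ≠ 0 := by simpa [hSdef] using hl
    have hsk : (Real.sqrt (lam k) : ℂ) ≠ 0 := by
      simpa using (Real.sqrt_ne_zero'.mpr (lt_of_le_of_ne (hlam0 k) (Ne.symm hk0)) : Real.sqrt (lam k) ≠ 0)
    have hsl : (Real.sqrt (lam l) : ℂ) ≠ 0 := by
      simpa using (Real.sqrt_ne_zero'.mpr (lt_of_le_of_ne (hlam0 l) (Ne.symm hl0)) : Real.sqrt (lam l) ≠ 0)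
    have : ∑ b, (starRingEnd ℂ) (u b k) * u b l
        = (∑ b, (starRingEnd ℂ) (W b k) * W b l) / ((Real.sqrt (lam k) : ℂ) * (Real.sqrt (lam l) : ℂ)) := by
      rw [Finset.sum_div]
      refine Finset.sum_congr rfl fun b _ => ?_
      simp [hudef, map_div₀, div_mul_div_comm]
    rw [this, horth]
    by_cases hkl : k = l
    · subst hkl
      rw [if_pos rfl, if_pos rfl, ← Complex.ofReal_mul, Real.mul_self_sqrt (hlam0 k)]
      exact div_self (by exact_mod_cast hk0)
    · simp [hkl]
  -- row sums: T b ≤ 1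
  have hT : ∀ b, ∑ k ∈ S, Complex.normSq (u b k) ≤ 1 := by
    intro b
    set T : ℝ := ∑ k ∈ S, Complex.normSq (u b k) with hTdef
    have hT0 : 0 ≤ T := Finset.sum_nonneg fun k _ => Complex.normSq_nonneg _
    set Pr : n → ℂ := fun c => ∑ k ∈ S, u b k * (starRingEnd ℂ) (u c k) with hPrdef
    have hPrb : Pr b = (T : ℂ) := by
      simp only [hPrdef, hTdef, Complex.mul_conj]
      norm_cast
    have hsum : ∑ c, Complex.normSq (Pr c) = T := by
      have hc : ∑ c, (Complex.normSq (Pr c) : ℂ) = (T : ℂ) := by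
        calc ∑ c, (Complex.normSq (Pr c) : ℂ) = ∑ c, Pr c * (starRingEnd ℂ) (Pr c) := by
              simp [Complex.mul_conj]
          _ = ∑ c, ∑ k ∈ S, ∑ l ∈ S, (u b k * (starRingEnd ℂ) (u b l)) *
                ((starRingEnd ℂ) (u c k) * u c l) := by
              refine Finset.sum_congr rfl fun c _ => ?_
              simp only [hPrdef, map_sum, _root_.map_mul, Complex.conj_conj]
              rw [Finset.sum_mul_sum]
              exact Finset.sum_congr rfl fun k _ => Finset.sum_congr rfl fun l _ => by ring
          _ = ∑ k ∈ S, ∑ l ∈ S, (u b k * (starRingEnd ℂ) (u b l)) *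
                ∑ c, (starRingEnd ℂ) (u c k) * u c l := by
              rw [Finset.sum_comm]
              refine Finset.sum_congr rfl fun k _ => ?_
              rw [Finset.sum_comm]
              exact Finset.sum_congr rfl fun l _ => (Finset.mul_sum _ _ _).symm
          _ = ∑ k ∈ S, u b k * (starRingEnd ℂ) (u b k) := by
              refine Finset.sum_congr rfl fun k hk => ?_
              rw [Finset.sum_congr rfl fun l hl => by rw [huorth k hk l hl]]
              simp [Finset.sum_ite_eq, hk]
          _ = (T : ℂ) := by
              simp only [hTdef, Complex.mul_conj]
              norm_cast
      have := congrArg Complex.re hc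
      simpa [Complex.re_sum] using this
    have hsq : T ^ 2 ≤ T := by
      have h1 : Complex.normSq (Pr b) ≤ ∑ c, Complex.normSq (Pr c) :=
        Finset.single_le_sum (fun c _ => Complex.normSq_nonneg _) (Finset.mem_univ b)
      rw [hsum, hPrb] at h1
      simpa [Complex.normSq_ofReal, sq] using h1
    nlinarith

  -- the dual coefficients
  set c : n → n → ℂ := fun b b' => ∑ k ∈ S, (starRingEnd ℂ) (u b k) * V b' k with hcdef
  have hcbound : ∀ b b', ‖c b b'‖ ≤ 1 := by
    intro b b'
    have h1 : ‖c b b'‖ ≤ ∑ k ∈ S, ‖u b k‖ * ‖V b' k‖ := by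
      refine (norm_sum_le _ _).trans ?_
      refine le_of_eq (Finset.sum_congr rfl fun k _ => ?_)
      rw [norm_mul, Complex.norm_conj]
    have h2 : (∑ k ∈ S, ‖u b k‖ * ‖V b' k‖) ^ 2
        ≤ (∑ k ∈ S, ‖u b k‖ ^ 2) * (∑ k ∈ S, ‖V b' k‖ ^ 2) :=
      Finset.sum_mul_sq_le_sq_mul_sq S _ _
    have h3 : (∑ k ∈ S, ‖u b k‖ ^ 2) ≤ 1 := by
      refine le_trans (le_of_eq (Finset.sum_congr rfl fun k _ => Complex.sq_norm _)) (hT b)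
    have h4 : (∑ k ∈ S, ‖V b' k‖ ^ 2) ≤ 1 := by
      calc (∑ k ∈ S, ‖V b' k‖ ^ 2) = ∑ k ∈ S, Complex.normSq (V b' k) :=
            Finset.sum_congr rfl fun k _ => Complex.sq_norm _
        _ ≤ ∑ k, Complex.normSq (V b' k) :=
            Finset.sum_le_sum_of_subset_of_nonneg (Finset.subset_univ S)
              (fun k _ _ => Complex.normSq_nonneg _)
        _ = 1 := hVrow b'
    have h5 : (0:ℝ) ≤ ∑ k ∈ S, ‖u b k‖ * ‖V b' k‖ :=
      Finset.sum_nonneg fun k _ => mul_nonneg (norm_nonneg _) (norm_nonneg _)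
    have h6 : (0:ℝ) ≤ ∑ k ∈ S, ‖u b k‖ ^ 2 :=
      Finset.sum_nonneg fun k _ => sq_nonneg _
    nlinarith [norm_nonneg (c b b')]
  -- the key identity
  have hkey : (∑ b, ∑ b', c b b' * M b b') = ((∑ k, Real.sqrt (lam k) : ℝ) : ℂ) := by
    calc ∑ b, ∑ b', c b b' * M b b'
        = ∑ b, ∑ k ∈ S, ∑ b', ((starRingEnd ℂ) (u b k) * V b' k) * M b b' := by
          refine Finset.sum_congr rfl fun b _ => ?_
          rw [Finset.sum_comm]
          exact Finset.sum_congr rfl fun b' _ => by rw [hcdef, Finset.sum_mul]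
      _ = ∑ k ∈ S, ∑ b, (starRingEnd ℂ) (u b k) * ∑ b', M b b' * V b' k := by
          rw [Finset.sum_comm]
          refine Finset.sum_congr rfl fun k _ => Finset.sum_congr rfl fun b _ => ?_
          rw [Finset.mul_sum]
          exact Finset.sum_congr rfl fun b' _ => by ring
      _ = ∑ k ∈ S, ∑ b, (starRingEnd ℂ) (u b k) * W b k := by
          refine Finset.sum_congr rfl fun k _ => Finset.sum_congr rfl fun b _ => ?_
          rw [hWdef, Matrix.mul_apply]
      _ = ∑ k ∈ S, (∑ b, (starRingEnd ℂ) (W b k) * W b k) / (Real.sqrt (lam k) : ℂ) := by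
          refine Finset.sum_congr rfl fun k _ => ?_
          rw [Finset.sum_div]
          refine Finset.sum_congr rfl fun b _ => ?_
          rw [hudef]
          simp only [map_div₀, Complex.conj_ofReal]
          ring
      _ = ∑ k ∈ S, ((Real.sqrt (lam k) : ℝ) : ℂ) := by
          refine Finset.sum_congr rfl fun k _ => ?_
          rw [horth k k, if_pos rfl, ← Complex.ofReal_div, Real.div_sqrt]
      _ = ((∑ k, Real.sqrt (lam k) : ℝ) : ℂ) := by
          push_cast
          refine Finset.sum_subset (Finset.subset_univ S) fun k _ hk => ?_
          have : lam k = 0 := by simpa [hSdef] using hk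
          simp [this]
  -- conclusion
  rw [htrace]
  have h7 : (∑ k, Real.sqrt (lam k)) ≤ ‖∑ b, ∑ b', c b b' * M b b'‖ := by
    rw [hkey]
    rw [Complex.norm_real, Real.norm_eq_abs]
    exact le_abs_self _
  refine h7.trans ?_
  refine (norm_sum_le _ _).trans ?_
  refine Finset.sum_le_sum fun b _ => ?_
  refine (norm_sum_le _ _).trans ?_
  refine Finset.sum_le_sum fun b' _ => ?_
  rw [norm_mul]
  calc ‖c b b'‖ * ‖M b b'‖
      ≤ 1 * ‖M b b'‖ :=
        mul_le_mul_of_nonneg_right (hcbound b b') (norm_nonneg _)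
    _ = ‖M b b'‖ := one_mul _

end AuxTraceNorm

/-- C_{l1}(ρ_AB) ≥ C^{A|B}_{l1}(ρ_AB) + C_{l1}(ρ_B), with ρ_B = Tr_A ρ_AB. -/
theorem Cl1_ge_CIQl1_add_local {A B : Type*} [Fintype A] [Fintype B] [DecidableEq A]
    [DecidableEq B] (ρ : Matrix (A × B) (A × B) ℂ) (hρ : ρ.PosSemidef) (hTr : ρ.trace = 1) :
    Cl1 ρ ≥ CIQl1 ρ + Cl1 (fun b b' => ∑ i, ρ (i, b) (i, b')) := by
  classical
  set F : A → A → ℝ := fun i j => ∑ b, ∑ b',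
    (if ((i, b) : A × B) = (j, b') then 0 else ‖ρ (i, b) (j, b')‖) with hFdef
  set D : A → ℝ := fun i => ∑ b, ∑ b',
    (if b = b' then 0 else ‖ρ (i, b) (i, b')‖) with hDdef
  have hsplit : Cl1 ρ = ∑ i, ∑ j, F i j := by
    rw [Cl1, Fintype.sum_prod_type]
    refine Finset.sum_congr rfl fun i _ => ?_
    have h1 : ∀ b, (∑ q : A × B, if ((i, b) : A × B) = q then (0:ℝ)
          else ‖ρ (i, b) q‖)
        = ∑ j, ∑ b', if ((i, b) : A × B) = (j, b') then (0:ℝ)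
          else ‖ρ (i, b) (j, b')‖ :=
      fun b => Fintype.sum_prod_type _
    rw [Finset.sum_congr rfl fun b _ => h1 b]
    exact Finset.sum_comm
  have hpoint : ∀ i j, (if i = j then (0:ℝ) else traceNorm (blockB ρ i j))
      + (if i = j then D i else 0) ≤ F i j := by
    intro i j
    simp only [hFdef, hDdef]
    by_cases h : i = j
    · subst h
      rw [if_pos rfl, if_pos rfl, zero_add]
      refine le_of_eq (Finset.sum_congr rfl fun b _ => Finset.sum_congr rfl fun b' _ => ?_)
      simp [Prod.ext_iff]
    · rw [if_neg h, if_neg h, add_zero]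
      rw [show (∑ b, ∑ b', if ((i, b) : A × B) = (j, b') then (0:ℝ)
            else ‖ρ (i, b) (j, b')‖)
          = ∑ b, ∑ b', ‖(blockB ρ i j) b b'‖ from
        Finset.sum_congr rfl fun b _ => Finset.sum_congr rfl fun b' _ => by
          rw [if_neg (by simp [Prod.ext_iff, h])]; rfl]
      exact traceNorm_le_sum_abs _
  have hsum1 : CIQl1 ρ + ∑ i, D i ≤ Cl1 ρ := by
    rw [hsplit, CIQl1, ← Finset.sum_add_distrib]
    refine Finset.sum_le_sum fun i _ => ?_
    have h2 : (∑ j, if i = j then (0:ℝ) else traceNorm (blockB ρ i j)) + D i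
        = ∑ j, ((if i = j then (0:ℝ) else traceNorm (blockB ρ i j))
            + (if i = j then D i else 0)) := by
      rw [Finset.sum_add_distrib]
      simp [Finset.sum_ite_eq]
    rw [h2]
    exact Finset.sum_le_sum fun j _ => hpoint i j
  have hsum2 : Cl1 (fun b b' => ∑ i, ρ (i, b) (i, b')) ≤ ∑ i, D i := by
    have h3 : Cl1 (fun b b' => ∑ i, ρ (i, b) (i, b'))
        ≤ ∑ b, ∑ b', ∑ i, (if b = b' then (0:ℝ) else ‖ρ (i, b) (i, b')‖) := by
      unfold Cl1
      refine Finset.sum_le_sum fun b _ => Finset.sum_le_sum fun b' _ => ?_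
      by_cases hbb : b = b'
      · simp [hbb]
      · rw [if_neg hbb, Finset.sum_congr rfl fun i _ => if_neg hbb]
        exact norm_sum_le _ _
    refine h3.trans (le_of_eq ?_)
    rw [show (∑ b, ∑ b', ∑ i, (if b = b' then (0:ℝ) else ‖ρ (i, b) (i, b')‖))
        = ∑ b, ∑ i, ∑ b', (if b = b' then (0:ℝ) else ‖ρ (i, b) (i, b')‖) from
      Finset.sum_congr rfl fun b _ => Finset.sum_comm]
    exact Finset.sum_comm
  linarith [hsum1, hsum2]
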